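/- For every natural number r ≥ 1, the kernel of the endomorphism of F_r = ℂ[α,β,γ]/J_r given by multiplication by (the class of) γ equals the image of the ideal J_{r−1} under the quotient map ℂ[α,β,γ] → F_r (this image makes sense since J_r ⊆ J_{r−1}). -/

import Mathlib

open MvPolynomial

/-- The triple (R¹_r, R²_r, R³_r) of polynomials in ℂ[α,β,γ] (α = X 0, β = X 1, γ = X 2). -/
noncomputable def Rr : ℕ → MvPolynomial (Fin 3) ℂ × MvPolynomial (Fin 3) ℂ × MvPolynomial (Fin 3) ℂ
  | 0 => (1, 0, 0)
  | (r + 1) =>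
      (X 0 * (Rr r).1 + C ((r : ℂ) ^ 2) * (Rr r).2.1,
       (X 1 + C ((-1 : ℂ) ^ (r + 1) * 8)) * (Rr r).1 + C ((2 * r : ℂ) / (r + 1)) * (Rr r).2.2,
       X 2 * (Rr r).1)

/-- The ideal J_r = (R¹_r, R²_r, R³_r) ⊆ ℂ[α,β,γ]. -/
noncomputable def Jr (r : ℕ) : Ideal (MvPolynomial (Fin 3) ℂ) :=
  Ideal.span {(Rr r).1, (Rr r).2.1, (Rr r).2.2}


abbrev BB := MvPolynomial (Fin 3) ℂ

noncomputable def φ : BB →ₐ[ℂ] BB := aeval ![X 0, X 1, 0]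
noncomputable def ψ (c : ℂ) : BB →ₐ[ℂ] Polynomial ℂ := aeval ![Polynomial.X, Polynomial.C c, 0]

lemma phiX0 : φ (X 0) = X 0 := by simp [φ]
lemma phiX1 : φ (X 1) = X 1 := by simp [φ]
lemma phiX2 : φ (X 2) = 0 := by simp [φ]
lemma phiC (a : ℂ) : φ (C a) = C a := by simp [φ, algebraMap_eq]
lemma psiX0 (c : ℂ) : ψ c (X 0) = Polynomial.X := by simp [ψ]
lemma psiX1 (c : ℂ) : ψ c (X 1) = Polynomial.C c := by simp [ψ]
lemma psiX2 (c : ℂ) : ψ c (X 2) = 0 := by simp [ψ]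
lemma psiC (c a : ℂ) : ψ c (C a) = Polynomial.C a := by simp [ψ]

lemma psi_comp_phi (c : ℂ) : (ψ c).comp φ = ψ c := by
  apply MvPolynomial.algHom_ext
  intro i
  fin_cases i <;> simp [phiX0, phiX1, phiX2, psiX0, psiX1, psiX2]

lemma R1_succ (r : ℕ) : (Rr (r+1)).1 = X 0 * (Rr r).1 + C ((r : ℂ) ^ 2) * (Rr r).2.1 := rfl
lemma R2_succ (r : ℕ) : (Rr (r+1)).2.1 =
    (X 1 + C ((-1 : ℂ) ^ (r + 1) * 8)) * (Rr r).1 + C ((2 * r : ℂ) / (r + 1)) * (Rr r).2.2 := rfl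
lemma R3_succ (r : ℕ) : (Rr (r+1)).2.2 = X 2 * (Rr r).1 := rfl
lemma R1_zero : (Rr 0).1 = 1 := rfl
lemma R2_zero : (Rr 0).2.1 = 0 := rfl
lemma R3_zero : (Rr 0).2.2 = 0 := rfl

lemma phi_R3 (r : ℕ) : φ (Rr r).2.2 = 0 := by
  cases r with
  | zero => simp [R3_zero]
  | succ s => rw [R3_succ, map_mul, phiX2, zero_mul]

lemma psi_R3 (c : ℂ) (r : ℕ) : ψ c (Rr r).2.2 = 0 := by
  cases r with
  | zero => simp [R3_zero]
  | succ s => rw [R3_succ, map_mul, psiX2, zero_mul]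

noncomputable def Pp (r : ℕ) : BB := φ (Rr r).1
noncomputable def Qq (r : ℕ) : BB := φ (Rr r).2.1

lemma Pp_zero : Pp 0 = 1 := by simp [Pp, R1_zero]
lemma Qq_zero : Qq 0 = 0 := by simp [Qq, R2_zero]
lemma Pp_succ (r : ℕ) : Pp (r+1) = X 0 * Pp r + C ((r : ℂ) ^ 2) * Qq r := by
  simp only [Pp, Qq, R1_succ, map_add, map_mul, phiX0, phiC, map_pow]
lemma degCmul (a : ℂ) (p : Polynomial ℂ) : (Polynomial.C a * p).degree ≤ p.degree := by
  rcases eq_or_ne a 0 with rfl|h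
  · simp
  · rw [Polynomial.degree_mul, Polynomial.degree_C h, zero_add]

lemma Qq_succ (r : ℕ) : Qq (r+1) = (X 1 + C ((-1 : ℂ) ^ (r + 1) * 8)) * Pp r := by
  have := phi_R3 r
  simp only [Qq, Pp, R2_succ, map_add, map_mul, phiX1, phiC, this, mul_zero, add_zero]

lemma psi_deg (c : ℂ) (r : ℕ) : (ψ c (Rr r).1).Monic ∧ (ψ c (Rr r).1).degree = (r : ℕ) ∧
    (ψ c (Rr r).2.1).degree < (r : ℕ) := by
  induction r with
  | zero => simp [R1_zero, R2_zero, Polynomial.monic_one]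
  | succ s ih =>
    obtain ⟨h1, h2, h3⟩ := ih
    have hA : (Polynomial.X * ψ c (Rr s).1).Monic := Polynomial.monic_X.mul h1
    have hAd : (Polynomial.X * ψ c (Rr s).1).degree = ((s+1 : ℕ) : WithBot ℕ) := by
      rw [Polynomial.degree_mul, Polynomial.degree_X, h2]
      push_cast; ring
    have hBd : (Polynomial.C ((s:ℂ)^2) * ψ c (Rr s).2.1).degree < ((s+1 : ℕ) : WithBot ℕ) :=
      lt_of_le_of_lt (degCmul _ _)
        (h3.trans (by exact_mod_cast Nat.cast_lt.mpr (Nat.lt_succ_self s)))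
    have e1 : ψ c (Rr (s+1)).1 = Polynomial.X * ψ c (Rr s).1
        + Polynomial.C ((s:ℂ)^2) * ψ c (Rr s).2.1 := by
      simp only [R1_succ, map_add, map_mul, psiX0, psiC, map_pow]
    have e2 : ψ c (Rr (s+1)).2.1 = Polynomial.C (c + (-1:ℂ)^(s+1)*8) * ψ c (Rr s).1 := by
      have := psi_R3 c s
      simp only [R2_succ, map_add, map_mul, psiX1, psiC, this, mul_zero, add_zero,
        Polynomial.C_add, Polynomial.C_mul, Polynomial.C_pow, Polynomial.C_neg, Polynomial.C_1]
    refine ⟨?_, ?_, ?_⟩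
    · rw [e1]; exact hA.add_of_left (hAd ▸ hBd)
    · rw [e1, Polynomial.degree_add_eq_left_of_degree_lt (hAd ▸ hBd), hAd]
    · rw [e2]
      refine lt_of_le_of_lt (degCmul _ _) ?_
      rw [h2]
      exact_mod_cast Nat.cast_lt.mpr (Nat.lt_succ_self s)

lemma psi_Pp (c : ℂ) (r : ℕ) : ψ c (Pp r) = ψ c (Rr r).1 := by
  have : (ψ c).comp φ = ψ c := psi_comp_phi c
  calc ψ c (Pp r) = ((ψ c).comp φ) (Rr r).1 := rfl
    _ = ψ c (Rr r).1 := by rw [this]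

lemma Pp_ne_zero (r : ℕ) : Pp r ≠ 0 := by
  intro h
  have h2 := psi_deg 0 r
  have : ψ 0 (Pp r) = 0 := by rw [h, map_zero]
  rw [psi_Pp] at this
  exact h2.1.ne_zero this

lemma not_lin_dvd_Pp (b : ℂ) (r : ℕ) : ¬ (X 1 + C b : BB) ∣ Pp r := by
  intro h
  have h2 := map_dvd (ψ (-b)) h
  have h3 : ψ (-b) (X 1 + C b) = 0 := by
    rw [map_add, psiX1, psiC, ← Polynomial.C_add, neg_add_cancel, Polynomial.C_0]
  rw [h3, psi_Pp, zero_dvd_iff] at h2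
  exact (psi_deg (-b) r).1.ne_zero h2

lemma prime_lin (b : ℂ) : Prime (X 1 + C b : BB) := by
  let e : BB ≃ₐ[ℂ] Polynomial (MvPolynomial (Fin 2) ℂ) :=
    (renameEquiv ℂ (Equiv.swap (0 : Fin 3) 1)).trans (finSuccEquiv ℂ 2)
  have he : e (X 1 + C b) = Polynomial.X - Polynomial.C (MvPolynomial.C (-b)) := by
    have hC : (finSuccEquiv ℂ 2) (C b : MvPolynomial (Fin 3) ℂ) = Polynomial.C (MvPolynomial.C b) := by
      rw [← MvPolynomial.algebraMap_eq, AlgEquiv.commutes]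
      simp [Polynomial.algebraMap_apply, MvPolynomial.algebraMap_eq]
    simp [e, renameEquiv_apply, finSuccEquiv_X_zero, sub_eq_add_neg, hC]
  have hp : Prime (e (X 1 + C b)) := he ▸ Polynomial.prime_X_sub_C _
  exact (MulEquiv.prime_iff e).mp hp

lemma no_common_prime : ∀ r, ∀ q : BB, Prime q → q ∣ Pp r → q ∣ Pp (r+1) → False := by
  intro r
  induction r with
  | zero =>
    intro q hq h1 _
    rw [Pp_zero] at h1
    exact hq.not_unit (isUnit_of_dvd_one h1)
  | succ s ih =>
    intro q hq h1 h2
    rw [Pp_succ, Qq_succ] at h2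
    have h3 : q ∣ C (((s+1:ℕ):ℂ)^2) * ((X 1 + C ((-1:ℂ)^(s+1)*8)) * Pp s) :=
      (dvd_add_right (Dvd.dvd.mul_left h1 (X 0))).mp h2
    have hk : (((s+1:ℕ):ℂ)^2) ≠ 0 :=
      pow_ne_zero _ (Nat.cast_ne_zero.mpr (Nat.succ_ne_zero s))
    have hu : IsUnit (C (((s+1:ℕ):ℂ)^2) : BB) := (isUnit_iff_ne_zero.mpr hk).map C
    have h4 : q ∣ (X 1 + C ((-1:ℂ)^(s+1)*8)) * Pp s := hu.dvd_mul_left.mp h3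
    rcases hq.2.2 _ _ h4 with h5 | h5
    · obtain ⟨e, he⟩ := h5
      rcases (prime_lin ((-1:ℂ)^(s+1)*8)).irreducible.isUnit_or_isUnit he with hu' | hu'
      · exact hq.not_unit hu'
      · exact not_lin_dvd_Pp _ _ (he ▸ (hu'.mul_right_dvd.mpr h1))
    · exact ih q hq h5 h1

lemma relPrime_Pp (r : ℕ) : IsRelPrime (Pp r) (Pp (r+1)) :=
  (UniqueFactorizationMonoid.isRelPrime_iff_no_prime_factors (Pp_ne_zero r)).mpr
    (fun d hdr hdr1 hd => no_common_prime r d hd hdr hdr1)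

lemma relPrime_lin_Pp (b : ℂ) (r : ℕ) : IsRelPrime (X 1 + C b : BB) (Pp r) := by
  intro d hd1 hd2
  by_contra hdu
  obtain ⟨e, he⟩ := hd1
  rcases (prime_lin b).irreducible.isUnit_or_isUnit he with h | h
  · exact hdu h
  · exact not_lin_dvd_Pp b r (he ▸ (h.mul_right_dvd.mpr hd2))

lemma phi_X_cases : ∀ i : Fin 3, φ (X i) = X i ∨ ((X 2 : BB) ∣ X i ∧ φ (X i) = 0) := by
  intro i
  fin_cases i
  · left; simp [φ]
  · left; simp [φ]
  · right; exact ⟨dvd_rfl, by simp [φ]⟩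

lemma X2_dvd_sub_phi (x : BB) : (X 2 : BB) ∣ x - φ x := by
  induction x using MvPolynomial.induction_on with
  | C a => rw [phiC, sub_self]; exact dvd_zero _
  | add p q hp hq =>
    rw [map_add]
    have h : p + q - (φ p + φ q) = (p - φ p) + (q - φ q) := by ring
    rw [h]; exact dvd_add hp hq
  | mul_X p i hp =>
    rw [map_mul]
    rcases phi_X_cases i with h | ⟨h1, h2⟩
    · rw [h]
      have h' : p * X i - φ p * X i = (p - φ p) * X i := by ring
      rw [h']; exact hp.mul_right _
    · rw [h2, mul_zero, sub_zero]
      exact Dvd.dvd.mul_left h1 p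


lemma mem_span3 {g1 g2 g3 x : BB} :
    x ∈ Ideal.span {g1, g2, g3} ↔ ∃ a b c, x = a * g1 + b * g2 + c * g3 := by
  rw [show ({g1, g2, g3} : Set BB) = insert g1 {g2, g3} from rfl, Ideal.mem_span_insert]
  constructor
  · rintro ⟨a, z, hz, rfl⟩
    obtain ⟨b, c, hbc⟩ := Ideal.mem_span_pair.mp hz
    exact ⟨a, b, c, by rw [← hbc]; ring⟩
  · rintro ⟨a, b, c, rfl⟩
    exact ⟨a, b * g2 + c * g3, Ideal.mem_span_pair.mpr ⟨b, c, rfl⟩, by ring⟩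

lemma mem_Jr {r : ℕ} {x : BB} :
    x ∈ Jr r ↔ ∃ a b c, x = a * (Rr r).1 + b * (Rr r).2.1 + c * (Rr r).2.2 := mem_span3

lemma g1_mem (r : ℕ) : (Rr r).1 ∈ Jr r := Ideal.subset_span (by simp)
lemma g2_mem (r : ℕ) : (Rr r).2.1 ∈ Jr r := Ideal.subset_span (by simp)
lemma g3_mem (r : ℕ) : (Rr r).2.2 ∈ Jr r := Ideal.subset_span (by simp)

lemma J_mono (s : ℕ) : Jr (s+1) ≤ Jr s := by
  intro x hx
  obtain ⟨a, b, c, rfl⟩ := mem_Jr.mp hx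
  rw [R1_succ, R2_succ, R3_succ]
  apply Ideal.add_mem
  apply Ideal.add_mem
  · refine Ideal.mul_mem_left _ _ (mem_Jr.mpr ⟨X 0, C ((s:ℂ)^2), 0, by ring⟩)
  · refine Ideal.mul_mem_left _ _ (mem_Jr.mpr
      ⟨X 1 + C ((-1:ℂ)^(s+1)*8), 0, C ((2*s:ℂ)/(s+1)), by ring⟩)
  · exact Ideal.mul_mem_left _ _ (Ideal.mul_mem_left _ _ (g1_mem s))

lemma X2_g1 (s : ℕ) : (X 2 : BB) * (Rr s).1 ∈ Jr (s+1) := by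
  rw [← R3_succ]; exact g3_mem (s+1)

lemma X2_g2 (s : ℕ) : (X 2 : BB) * (Rr s).2.1 ∈ Jr (s+1) := by
  cases s with
  | zero => rw [R2_zero, mul_zero]; exact Ideal.zero_mem _
  | succ t =>
    set s := t + 1
    have hk : ((s:ℕ):ℂ)^2 ≠ 0 := pow_ne_zero _ (Nat.cast_ne_zero.mpr (Nat.succ_ne_zero t))
    have hCk : (C (((s:ℕ):ℂ)^2)⁻¹ * C (((s:ℕ):ℂ)^2) : BB) = 1 := by
      rw [← C_mul, inv_mul_cancel₀ hk, C_1]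
    have h : C (((s:ℕ):ℂ)^2) * (X 2 * (Rr s).2.1)
        = X 2 * (Rr (s+1)).1 - X 0 * (Rr (s+1)).2.2 := by
      rw [R1_succ, R3_succ]; push_cast; ring
    have h2 : (X 2 : BB) * (Rr s).2.1
        = (C (((s:ℕ):ℂ)^2)⁻¹ * X 2) * (Rr (s+1)).1
          - (C (((s:ℕ):ℂ)^2)⁻¹ * X 0) * (Rr (s+1)).2.2 := by
      calc (X 2 : BB) * (Rr s).2.1
          = (C (((s:ℕ):ℂ)^2)⁻¹ * C (((s:ℕ):ℂ)^2)) * (X 2 * (Rr s).2.1) := by rw [hCk, one_mul]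
        _ = C (((s:ℕ):ℂ)^2)⁻¹ * (C (((s:ℕ):ℂ)^2) * (X 2 * (Rr s).2.1)) := by ring
        _ = _ := by rw [h]; ring
    rw [h2]
    exact Ideal.sub_mem _ (Ideal.mul_mem_left _ _ (g1_mem (s+1)))
      (Ideal.mul_mem_left _ _ (g3_mem (s+1)))

lemma X2_g3 (s : ℕ) : (X 2 : BB) * (Rr s).2.2 ∈ Jr (s+1) := by
  cases s with
  | zero => rw [R3_zero, mul_zero]; exact Ideal.zero_mem _
  | succ t =>
    set k : ℂ := (2*(((t+1:ℕ)):ℂ))/((((t+1:ℕ)):ℂ)+1) with hkdef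
    have hnum : (2*(((t+1:ℕ)):ℂ)) ≠ 0 := by
      rw [show (2*(((t+1:ℕ)):ℂ)) = ((2*(t+1) : ℕ):ℂ) by push_cast; ring]
      exact Nat.cast_ne_zero.mpr (by omega)
    have hden : ((((t+1:ℕ)):ℂ))+1 ≠ 0 := by
      rw [show ((((t+1:ℕ)):ℂ))+1 = ((t+2 : ℕ):ℂ) by push_cast; ring]
      exact Nat.cast_ne_zero.mpr (by omega)
    have hk : k ≠ 0 := div_ne_zero hnum hden
    have hCk : (C k⁻¹ * C k : BB) = 1 := by rw [← C_mul, inv_mul_cancel₀ hk, C_1]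
    have hcoef : C ((2 * (((t+1):ℕ)) : ℂ) / ((((t+1):ℕ)) + 1)) = (C k : BB) := by rw [hkdef]
    have h : C k * (X 2 * (Rr (t+1)).2.2)
        = X 2 * (Rr (t+2)).2.1 - (X 1 + C ((-1:ℂ)^(t+2)*8)) * (Rr (t+2)).2.2 := by
      rw [R2_succ (t+1), R3_succ (t+1), hcoef]; ring
    have h2 : (X 2 : BB) * (Rr (t+1)).2.2
        = (C k⁻¹ * X 2) * (Rr (t+2)).2.1
          - (C k⁻¹ * (X 1 + C ((-1:ℂ)^(t+2)*8))) * (Rr (t+2)).2.2 := by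
      calc (X 2 : BB) * (Rr (t+1)).2.2
          = (C k⁻¹ * C k) * (X 2 * (Rr (t+1)).2.2) := by rw [hCk, one_mul]
        _ = C k⁻¹ * (C k * (X 2 * (Rr (t+1)).2.2)) := by ring
        _ = _ := by rw [h]; ring
    rw [h2]
    exact Ideal.sub_mem _ (Ideal.mul_mem_left _ _ (g2_mem (t+2)))
      (Ideal.mul_mem_left _ _ (g3_mem (t+2)))

lemma phi_comp_phi : φ.comp φ = φ := by
  apply MvPolynomial.algHom_ext
  intro i
  fin_cases i <;> simp [φ]

lemma phi_idem (x : BB) : φ (φ x) = φ x := by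
  calc φ (φ x) = (φ.comp φ) x := rfl
    _ = φ x := by rw [phi_comp_phi]

lemma key_lemma (s : ℕ) (p : BB) : (X 2 : BB) * p ∈ Jr (s+1) ↔ p ∈ Jr s := by
  constructor
  · intro h
    obtain ⟨a, b, c, hab⟩ := mem_Jr.mp h
    rw [R3_succ] at hab
    -- apply φ
    have hphi : 0 = φ a * Pp (s+1) + φ b * Qq (s+1) := by
      have := congrArg φ hab
      rw [map_mul, phiX2, zero_mul, map_add, map_add, map_mul, map_mul, map_mul,
        map_mul, phiX2, zero_mul, mul_zero, add_zero] at this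
      exact this
    have hdvd : Qq (s+1) ∣ φ a * Pp (s+1) := ⟨-(φ b), by linear_combination -hphi⟩
    have hrel : IsRelPrime (Qq (s+1)) (Pp (s+1)) := by
      rw [Qq_succ]
      exact IsRelPrime.mul_left (relPrime_lin_Pp _ _) (relPrime_Pp s)
    have hdvd2 : Qq (s+1) ∣ φ a := hrel.dvd_of_dvd_mul_right hdvd
    obtain ⟨t0, ht0⟩ := hdvd2
    -- replace t0 by φ t0
    set t : BB := φ t0 with htdef
    have ht : φ a = Qq (s+1) * t := by
      have := congrArg φ ht0
      rw [phi_idem, map_mul] at this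
      rw [this, htdef]
      congr 1
      exact phi_idem _
    set u : BB := a - t * (Rr (s+1)).2.1 with hu
    set v : BB := b + t * (Rr (s+1)).1 with hv
    have hphiu : φ u = 0 := by
      rw [hu, map_sub, map_mul, ht, htdef, phi_idem]
      show Qq (s+1) * φ t0 - φ t0 * Qq (s+1) = 0
      ring
    have hphiv : φ v * Qq (s+1) = 0 := by
      rw [hv, map_add, map_mul, htdef, phi_idem]
      show (φ b + φ t0 * Pp (s+1)) * Qq (s+1) = 0
      have : φ b * Qq (s+1) = - (φ a * Pp (s+1)) := by linear_combination -hphi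
      rw [add_mul, this, ht, htdef]
      ring
    have hQne : Qq (s+1) ≠ 0 := by
      rw [Qq_succ]
      exact mul_ne_zero (prime_lin _).ne_zero (Pp_ne_zero s)
    have hphiv0 : φ v = 0 := by
      rcases mul_eq_zero.mp hphiv with h' | h'
      · exact h'
      · exact absurd h' hQne
    obtain ⟨u1, hu1⟩ : (X 2 : BB) ∣ u := by
      have := X2_dvd_sub_phi u
      rwa [hphiu, sub_zero] at this
    obtain ⟨v1, hv1⟩ : (X 2 : BB) ∣ v := by
      have := X2_dvd_sub_phi v
      rwa [hphiv0, sub_zero] at this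
    have habuv : (X 2 : BB) * p = u * (Rr (s+1)).1 + v * (Rr (s+1)).2.1 + c * (X 2 * (Rr s).1) := by
      rw [hab, hu, hv]; ring
    have hfinal : (X 2 : BB) * p = X 2 * (u1 * (Rr (s+1)).1 + v1 * (Rr (s+1)).2.1 + c * (Rr s).1) := by
      rw [habuv, hu1, hv1]; ring
    have hp : p = u1 * (Rr (s+1)).1 + v1 * (Rr (s+1)).2.1 + c * (Rr s).1 :=
      mul_left_cancel₀ (X_ne_zero 2) hfinal
    rw [hp]
    refine Ideal.add_mem _ (Ideal.add_mem _ ?_ ?_) ?_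
    · exact Ideal.mul_mem_left _ _ (J_mono s (g1_mem (s+1)))
    · exact Ideal.mul_mem_left _ _ (J_mono s (g2_mem (s+1)))
    · exact Ideal.mul_mem_left _ _ (g1_mem s)
  · intro h
    obtain ⟨a, b, c, rfl⟩ := mem_Jr.mp h
    have : (X 2 : BB) * (a * (Rr s).1 + b * (Rr s).2.1 + c * (Rr s).2.2)
        = a * (X 2 * (Rr s).1) + b * (X 2 * (Rr s).2.1) + c * (X 2 * (Rr s).2.2) := by ring
    rw [this]
    exact Ideal.add_mem _ (Ideal.add_mem _ (Ideal.mul_mem_left _ _ (X2_g1 s))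
      (Ideal.mul_mem_left _ _ (X2_g2 s))) (Ideal.mul_mem_left _ _ (X2_g3 s))

/-- For every r ≥ 1, the kernel of the endomorphism of F_r = ℂ[α,β,γ]/J_r given by
multiplication by (the class of) γ equals the image of the ideal J_{r−1} under the quotient
map ℂ[α,β,γ] → F_r (this image makes sense since J_r ⊆ J_{r−1}). -/
theorem stmt11 (r : ℕ) (hr : 1 ≤ r) :
    {x : MvPolynomial (Fin 3) ℂ ⧸ Jr r | Ideal.Quotient.mk (Jr r) (X 2) * x = 0}
      = (Ideal.Quotient.mk (Jr r)) '' (Jr (r - 1)) := by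

  obtain ⟨s, rfl⟩ : ∃ s, r = s + 1 := ⟨r - 1, (Nat.succ_pred_eq_of_pos hr).symm⟩
  have hs1 : s + 1 - 1 = s := rfl
  rw [hs1]
  ext x
  obtain ⟨p, rfl⟩ := Ideal.Quotient.mk_surjective x
  simp only [Set.mem_setOf_eq, Set.mem_image, SetLike.mem_coe]
  rw [← map_mul, Ideal.Quotient.eq_zero_iff_mem, key_lemma]
  constructor
  · intro h
    exact ⟨p, h, rfl⟩
  · rintro ⟨q, hq, hqp⟩
    have : q - p ∈ Jr (s+1) := Ideal.Quotient.eq.mp hqp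
    have h2 : q - p ∈ Jr s := J_mono s this
    have : p = q - (q - p) := by ring
    rw [this]
    exact Ideal.sub_mem _ hq h2
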